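/- arXiv:1010.0999 — 3 statements merged into one kernel-verified Lean document; each statement's English description precedes it below -/
import Mathlib

section
/- Let G be a σ-compact locally compact group, K a compact normal subgroup of G, and π : G → G/K the canonical quotient map. If A ⊆ G satisfies A = AK, then A is Haar measurable in G if and only if π(A) is Haar measurable in G/K. -/
open MeasureTheory Measure Set Filter Topology Pointwise
open scoped NNReal ENNReal

/-- Two Haar measures on a σ-compact locally compact group agree up to a scalar. -/
lemma aux_haar_eq_smul {X : Type*} [Group X] [TopologicalSpace X] [IsTopologicalGroup X]
    [T2Space X] [LocallyCompactSpace X] [SigmaCompactSpace X]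
    [MeasurableSpace X] [BorelSpace X]
    (μ' μ : Measure X) [μ.IsHaarMeasure] [μ'.IsHaarMeasure] :
    μ' = ((μ'.haarScalarFactor μ : ℝ≥0) : ℝ≥0∞) • μ := by
  have hsmul : (μ'.haarScalarFactor μ • μ) = (((μ'.haarScalarFactor μ : ℝ≥0) : ℝ≥0∞) • μ) := by
    ext s hs
    simp only [Measure.smul_apply, ENNReal.smul_def, smul_eq_mul]
  rw [← hsmul]
  ext s hs
  have hcov : ∀ ρ : Measure X, ρ s = ⨆ n, ρ (s ∩ compactCovering X n) := by
    intro ρ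
    conv_lhs => rw [show s = ⋃ n, s ∩ compactCovering X n by
      rw [← Set.inter_iUnion, iUnion_compactCovering, Set.inter_univ]]
    have hmono : Monotone fun n => s ∩ compactCovering X n :=
      fun m n h => Set.inter_subset_inter_right s (compactCovering_subset X h)
    exact Directed.measure_iUnion hmono.directed_le
  rw [hcov μ', hcov (μ'.haarScalarFactor μ • μ)]
  refine iSup_congr fun n => ?_
  rw [Measure.smul_apply]
  exact Measure.measure_isMulInvariant_eq_smul_of_isCompact_closure μ' μ
    ((isCompact_compactCovering X n).closure_of_subset Set.inter_subset_right)

/-- Null-measurability only depends on the measure up to a positive scalar. -/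
lemma aux_null_iff {α : Type*} [MeasurableSpace α] {μ ν : Measure α} {c : ℝ≥0}
    (hc : c ≠ 0) (h : ν = ((c : ℝ≥0) : ℝ≥0∞) • μ) (s : Set α) :
    NullMeasurableSet s ν ↔ NullMeasurableSet s μ := by
  subst h
  constructor
  · intro h
    exact h.mono_ac (Measure.absolutelyContinuous_smul (by simp [hc]))
  · intro h
    exact h.mono_ac Measure.smul_absolutelyContinuous

/-- Let `G` be a σ-compact locally compact group, `K` a compact normal subgroup of `G`, and
`π : G → G/K` the canonical quotient map. If `A ⊆ G` satisfies `A = AK`, then `A` is Haar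
measurable in `G` iff `π(A)` is Haar measurable in `G/K`. -/
theorem stmt_0 {G : Type*} [Group G] [TopologicalSpace G] [IsTopologicalGroup G]
    [T2Space G] [LocallyCompactSpace G] [SigmaCompactSpace G]
    [MeasurableSpace G] [BorelSpace G]
    (μ : Measure G) [μ.IsHaarMeasure]
    (K : Subgroup G) [K.Normal] (hK : IsCompact (K : Set G))
    [MeasurableSpace (G ⧸ K)] [BorelSpace (G ⧸ K)]
    (ν : Measure (G ⧸ K)) [ν.IsHaarMeasure]
    (A : Set G) (hA : A * (K : Set G) = A) :
    NullMeasurableSet A μ ↔ NullMeasurableSet (QuotientGroup.mk '' A : Set (G ⧸ K)) ν := by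
  classical
  haveI hKclosed : IsClosed (K : Set G) := hK.isClosed
  haveI : T3Space (G ⧸ K) := QuotientGroup.instT3Space K
  haveI : SigmaCompactSpace (G ⧸ K) :=
    ⟨⟨fun n => QuotientGroup.mk '' compactCovering G n,
      fun n => (isCompact_compactCovering G n).image continuous_quot_mk,
      by
        rw [← Set.image_iUnion, iUnion_compactCovering, Set.image_univ,
          QuotientGroup.mk_surjective.range_eq]⟩⟩
  have hmkcont : Continuous (QuotientGroup.mk : G → G ⧸ K) := continuous_quot_mk
  have hmkmeas : Measurable (QuotientGroup.mk : G → G ⧸ K) := hmkcont.measurable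
  -- the quotient map is proper
  have hproper : Tendsto (QuotientGroup.mk : G → G ⧸ K) (cocompact G) (cocompact (G ⧸ K)) := by
    have hP : IsProperMap (QuotientGroup.mk : G → G ⧸ K) := by
      rw [isProperMap_iff_isClosedMap_and_compact_fibers]
      refine ⟨hmkcont, QuotientGroup.isClosedMap_coe hK, fun y => ?_⟩
      obtain ⟨g, rfl⟩ := QuotientGroup.mk_surjective y
      have hfib : (QuotientGroup.mk : G → G ⧸ K) ⁻¹' {(g : G ⧸ K)} = (g * ·) '' (K : Set G) := by
        ext x
        simp only [Set.mem_preimage, Set.mem_singleton_iff, Set.mem_image]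
        constructor
        · intro h
          exact ⟨g⁻¹ * x, (QuotientGroup.eq).mp h.symm, by group⟩
        · rintro ⟨k, hk, rfl⟩
          exact ((QuotientGroup.eq).mpr (by simpa using hk)).symm
      rw [hfib]
      exact hK.image (continuous_mul_left g)
    rw [hasBasis_cocompact.tendsto_right_iff]
    intro L hL
    have : IsCompact ((QuotientGroup.mk : G → G ⧸ K) ⁻¹' L) := hP.isCompact_preimage hL
    filter_upwards [this.compl_mem_cocompact] with x hx
    exact hx
  -- the reference Haar measures
  set μ₀ : Measure G := Measure.haar with hμ₀
  set ν₀ : Measure (G ⧸ K) := μ₀.map (QuotientGroup.mk : G → G ⧸ K) with hν₀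
  haveI : ν₀.IsHaarMeasure := by
    have := Measure.isHaarMeasure_map μ₀ (QuotientGroup.mk' K)
      (by simpa [QuotientGroup.coe_mk'] using hmkcont)
      QuotientGroup.mk_surjective
      (by simpa [QuotientGroup.coe_mk'] using hproper)
    simpa [QuotientGroup.coe_mk'] using this
  -- transfer null-measurability to the reference measures
  have hμiff : NullMeasurableSet A μ ↔ NullMeasurableSet A μ₀ :=
    aux_null_iff (Measure.haarScalarFactor_pos_of_isHaarMeasure μ μ₀).ne'
      (aux_haar_eq_smul μ μ₀) A
  have hνiff : NullMeasurableSet (QuotientGroup.mk '' A : Set (G ⧸ K)) ν ↔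
      NullMeasurableSet (QuotientGroup.mk '' A : Set (G ⧸ K)) ν₀ :=
    aux_null_iff (Measure.haarScalarFactor_pos_of_isHaarMeasure ν ν₀).ne'
      (aux_haar_eq_smul ν ν₀) _
  rw [hμiff, hνiff]
  have hAsat : (QuotientGroup.mk : G → G ⧸ K) ⁻¹' (QuotientGroup.mk '' A) = A := by
    rw [QuotientGroup.preimage_image_mk_eq_mul, hA]
  constructor
  · -- hard direction: A null measurable ⇒ image null measurable
    intro h
    obtain ⟨B, hBA, hBm, hBae⟩ := h.exists_measurable_subset_ae_eq
    have hAB : μ₀ (A \ B) = 0 := ((ae_eq_set.mp hBae).2)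
    -- approximate B from inside by compacts
    have hBC : ∀ n j : ℕ, ∃ c : Set G, c ⊆ B ∩ spanningSets μ₀ n ∧ IsCompact c ∧
        μ₀ ((B ∩ spanningSets μ₀ n) \ c) < (((j : ℝ≥0∞) + 1))⁻¹ := by
      intro n j
      have hmeas : MeasurableSet (B ∩ spanningSets μ₀ n) :=
        hBm.inter (measurableSet_spanningSets μ₀ n)
      have hfin : μ₀ (B ∩ spanningSets μ₀ n) ≠ ∞ :=
        ne_top_of_le_ne_top (measure_spanningSets_lt_top μ₀ n).ne
          (measure_mono Set.inter_subset_right)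
      exact hmeas.exists_isCompact_diff_lt hfin (ENNReal.inv_ne_zero.mpr (by simp))
    choose c hcsub hccomp hclt using hBC
    set C : Set G := ⋃ n, ⋃ j, c n j with hC
    have hCB : C ⊆ B := by
      refine Set.iUnion_subset fun n => Set.iUnion_subset fun j => ?_
      exact (hcsub n j).trans Set.inter_subset_left
    have hBCnull : μ₀ (B \ C) = 0 := by
      have hsub : B \ C ⊆ ⋃ n, ((B ∩ spanningSets μ₀ n) \ C) := by
        intro x hx
        obtain ⟨n, hn⟩ := Set.mem_iUnion.mp
          ((iUnion_spanningSets μ₀).symm ▸ Set.mem_univ x :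
            x ∈ ⋃ n, spanningSets μ₀ n)
        exact Set.mem_iUnion.mpr ⟨n, ⟨hx.1, hn⟩, hx.2⟩
      have hzero : ∀ n, μ₀ ((B ∩ spanningSets μ₀ n) \ C) = 0 := by
        intro n
        by_contra hne
        obtain ⟨m, hm⟩ := ENNReal.exists_inv_nat_lt hne
        have h1 : μ₀ ((B ∩ spanningSets μ₀ n) \ C) ≤ μ₀ ((B ∩ spanningSets μ₀ n) \ c n m) :=
          measure_mono (Set.diff_subset_diff_right
            ((Set.subset_iUnion _ m).trans (Set.subset_iUnion (fun k => ⋃ j, c k j) n)))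
        have h2 : ((m : ℝ≥0∞) + 1)⁻¹ ≤ ((m : ℝ≥0∞))⁻¹ :=
          ENNReal.inv_le_inv.mpr le_self_add
        exact absurd ((h1.trans (hclt n m).le).trans h2) (not_le.mpr hm)
      refine le_antisymm ?_ zero_le
      calc μ₀ (B \ C) ≤ μ₀ (⋃ n, ((B ∩ spanningSets μ₀ n) \ C)) := measure_mono hsub
      _ ≤ ∑' n, μ₀ ((B ∩ spanningSets μ₀ n) \ C) := measure_iUnion_le _
      _ = 0 := by simp [hzero]
    -- the saturated σ-compact core
    set C' : Set G := C * (K : Set G) with hC'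
    have hC'A : C' ⊆ A := by
      rw [← hA]
      exact Set.mul_subset_mul_right (hCB.trans hBA)
    have hCC' : C ⊆ C' := fun x hx => ⟨x, hx, 1, K.one_mem, mul_one x⟩
    set N' : Set G := A \ C' with hN'
    have hC'K : C' * (K : Set G) = C' := by
      rw [hC', mul_assoc, coe_mul_coe]
    have hN'K : N' * (K : Set G) = N' := by
      apply Set.Subset.antisymm
      · rintro z ⟨y, hy, k, hk, rfl⟩
        refine ⟨?_, fun hz => hy.2 ?_⟩
        · rw [← hA]; exact Set.mul_mem_mul hy.1 hk
        · have : y = y * k * k⁻¹ := by group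
          rw [this, ← hC'K]
          exact Set.mul_mem_mul hz (K.inv_mem hk)
      · intro z hz
        exact ⟨z, hz, 1, K.one_mem, mul_one z⟩
    have hN'sat : (QuotientGroup.mk : G → G ⧸ K) ⁻¹' (QuotientGroup.mk '' N') = N' := by
      rw [QuotientGroup.preimage_image_mk_eq_mul, hN'K]
    have hN'0 : μ₀ N' = 0 := by
      have hsub : N' ⊆ (A \ B) ∪ (B \ C) := by
        intro x hx
        by_cases hxB : x ∈ B
        · exact Or.inr ⟨hxB, fun hxC => hx.2 (hCC' hxC)⟩
        · exact Or.inl ⟨hx.1, hxB⟩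
      refine le_antisymm ?_ zero_le
      calc μ₀ N' ≤ μ₀ ((A \ B) ∪ (B \ C)) := measure_mono hsub
      _ ≤ μ₀ (A \ B) + μ₀ (B \ C) := measure_union_le _ _
      _ = 0 := by rw [hAB, hBCnull, add_zero]
    -- image of the saturated null set is null
    have key : ∀ U : Set G, IsOpen U → N' ⊆ U →
        ν₀ (QuotientGroup.mk '' N') ≤ μ₀ U := by
      intro U hU hNU
      set V : Set G :=
        ((QuotientGroup.mk : G → G ⧸ K) ⁻¹' (QuotientGroup.mk '' Uᶜ))ᶜ with hV
      have hVopen : IsOpen V := by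
        have hclosed : IsClosed (QuotientGroup.mk '' Uᶜ : Set (G ⧸ K)) :=
          QuotientGroup.isClosedMap_coe hK _ hU.isClosed_compl
        exact (hclosed.preimage hmkcont).isOpen_compl
      have hVU : V ⊆ U := by
        intro x hx
        by_contra hxU
        exact hx (Set.mem_image_of_mem _ hxU)
      have hNV : N' ⊆ V := by
        intro x hx hmem
        obtain ⟨y, hyU, hyx⟩ := hmem
        have hyN' : y ∈ N' := by
          rw [← hN'sat]
          exact Set.mem_preimage.mpr (hyx ▸ Set.mem_image_of_mem _ hx)
        exact hyU (hNU hyN')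
      have hVsat : (QuotientGroup.mk : G → G ⧸ K) ⁻¹' (QuotientGroup.mk '' V) = V := by
        rw [hV, ← Set.preimage_compl, Set.image_preimage_eq _ QuotientGroup.mk_surjective,
          Set.preimage_compl]
      calc ν₀ (QuotientGroup.mk '' N')
          ≤ ν₀ (QuotientGroup.mk '' V) := measure_mono (Set.image_mono hNV)
        _ = μ₀ ((QuotientGroup.mk : G → G ⧸ K) ⁻¹' (QuotientGroup.mk '' V)) := by
            rw [hν₀, Measure.map_apply hmkmeas
              (QuotientGroup.isOpenMap_coe V hVopen).measurableSet]
        _ = μ₀ V := by rw [hVsat]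
        _ ≤ μ₀ U := measure_mono hVU
    have himgN' : ν₀ (QuotientGroup.mk '' N') = 0 := by
      refine le_antisymm ?_ zero_le
      refine ENNReal.le_of_forall_pos_le_add fun ε hε _ => ?_
      obtain ⟨U, hNU, hUopen, hUlt⟩ :=
        Set.exists_isOpen_lt_of_lt N' ε (by rw [hN'0]; exact ENNReal.coe_pos.mpr hε)
      calc ν₀ (QuotientGroup.mk '' N') ≤ μ₀ U := key U hUopen hNU
        _ ≤ (ε : ℝ≥0∞) := hUlt.le
        _ ≤ 0 + (ε : ℝ≥0∞) := by rw [zero_add]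
    -- the image of the σ-compact core is measurable
    have hCmeas : MeasurableSet (QuotientGroup.mk '' C : Set (G ⧸ K)) := by
      rw [hC, Set.image_iUnion]
      refine MeasurableSet.iUnion fun n => ?_
      rw [Set.image_iUnion]
      exact MeasurableSet.iUnion fun j =>
        (((hccomp n j).image hmkcont).isClosed).measurableSet
    have himgC' : (QuotientGroup.mk '' C' : Set (G ⧸ K)) = QuotientGroup.mk '' C := by
      rw [hC', ← QuotientGroup.preimage_image_mk_eq_mul,
        Set.image_preimage_eq _ QuotientGroup.mk_surjective]
    have himgA : (QuotientGroup.mk '' A : Set (G ⧸ K)) =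
        (QuotientGroup.mk '' C) ∪ (QuotientGroup.mk '' N') := by
      conv_lhs => rw [show A = C' ∪ N' from (Set.union_diff_cancel hC'A).symm]
      rw [Set.image_union, himgC']
    rw [himgA]
    exact hCmeas.nullMeasurableSet.union_null himgN'
  · -- easy direction: pull back along the quotient map
    intro h
    have hqmp : Measure.QuasiMeasurePreserving (QuotientGroup.mk : G → G ⧸ K) μ₀ ν₀ :=
      hmkmeas.quasiMeasurePreserving μ₀
    have := h.preimage hqmp
    rwa [hAsat] at this
end

section
/- Let (A_s)_{s ∈ S} with S ⊆ ℝ be a point-finite family of subsets of a set X. For rationals enumerated as (q_m) and n ∈ ℕ, define W_{mn} = ⋃{A_s : |s − q_m| < 1/n}. Then for every s ∈ S, choosing sequences m_k, n_k with q_{m_k} → s and n_k → ∞, one has A_s = ⋂_k W_{m_k n_k}. -/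
/-- Let `(A s)_{s ∈ S}`, `S ⊆ ℝ`, be a point-finite family of subsets of `X`, let `q` be an
enumeration of the rationals and `W m n = ⋃ {A t : t ∈ S, |t − q m| < 1/n}`. If `m k`, `n k`
are sequences with `n` strictly increasing (hence `n k → ∞`) and `|s − q (m k)| < 1/(n k)`
(hence `q (m k) → s`), then `A s = ⋂ k, W (m k) (n k)`. -/
theorem stmt_8 {X : Type*} (S : Set ℝ) (A : ℝ → Set X)
    (hpf : ∀ x : X, {s ∈ S | x ∈ A s}.Finite)
    (q : ℕ → ℚ) (hq : Function.Bijective q)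
    (s : ℝ) (hs : s ∈ S) (m n : ℕ → ℕ) (hn : StrictMono n)
    (hclose : ∀ k, |s - (q (m k) : ℝ)| < 1 / (n k : ℝ)) :
    A s = ⋂ k : ℕ, ⋃ t ∈ {t ∈ S | |t - (q (m k) : ℝ)| < 1 / (n k : ℝ)}, A t := by
  apply Set.Subset.antisymm
  · intro x hx
    refine Set.mem_iInter.2 fun k => Set.mem_biUnion ?_ hx
    exact ⟨hs, hclose k⟩
  · intro x hx
    rw [Set.mem_iInter] at hx
    have hch : ∀ k, ∃ t, (t ∈ S ∧ |t - (q (m k) : ℝ)| < 1 / (n k : ℝ)) ∧ x ∈ A t := by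
      intro k
      have := hx k
      simpa using this
    choose t ht hxt using hch
    have hfin := hpf x
    have hmem : ∀ k, t k ∈ hfin.toFinset := fun k =>
      hfin.mem_toFinset.2 ⟨(ht k).1, hxt k⟩
    -- infinite fiber
    set f : ℕ → hfin.toFinset := fun k => ⟨t k, hmem k⟩ with hf
    obtain ⟨⟨t₀, ht₀⟩, hinf⟩ := Finite.exists_infinite_fiber f
    have hinf' : {k | t k = t₀}.Infinite := by
      have : (f ⁻¹' {⟨t₀, ht₀⟩}).Infinite := Set.infinite_coe_iff.1 hinf
      refine this.mono ?_
      intro k hk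
      have : f k = ⟨t₀, ht₀⟩ := hk
      simpa [hf, Subtype.ext_iff] using this
    -- t₀ = s
    have hts : t₀ = s := by
      by_contra hne
      have hε : (0:ℝ) < |t₀ - s| := abs_pos.2 (sub_ne_zero.2 hne)
      obtain ⟨K, hK⟩ := exists_nat_gt (2 / |t₀ - s|)
      obtain ⟨k, hk, hkK⟩ := hinf'.exists_gt K
      have hnk : (K : ℝ) < (n k : ℝ) := by
        have : K < n k := lt_of_lt_of_le hkK (hn.le_apply)
        exact_mod_cast this
      have hKpos : (0:ℝ) < K := lt_of_le_of_lt (by positivity) hK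
      have h1 : |t₀ - s| ≤ |t₀ - (q (m k) : ℝ)| + |s - (q (m k) : ℝ)| := by
        have := abs_sub_abs_le_abs_sub (t₀ - (q (m k):ℝ)) (s - (q (m k):ℝ))
        calc |t₀ - s| = |(t₀ - (q (m k):ℝ)) - (s - (q (m k):ℝ))| := by ring_nf
          _ ≤ |t₀ - (q (m k):ℝ)| + |s - (q (m k):ℝ)| := abs_sub _ _
      have h2 : |t₀ - (q (m k) : ℝ)| < 1 / (n k : ℝ) := hk ▸ (ht k).2
      have h3 : |t₀ - s| < 2 / (n k : ℝ) := by
        have h5 := hclose k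
        have h6 : (2:ℝ) / (n k : ℝ) = 1 / (n k : ℝ) + 1 / (n k : ℝ) := by ring
        linarith
      have h4 : 2 / (n k : ℝ) < |t₀ - s| := by
        rw [div_lt_iff₀ (lt_trans hKpos hnk)]
        rw [div_lt_iff₀ hε] at hK
        nlinarith
      linarith
    exact hts ▸ (hinf'.nonempty.elim fun k hk => hk ▸ hxt k)
end

section
/- Assume Martin's Axiom (or just: the additivity of the null ideal equals the continuum). Let G be a locally compact Polish group and S ⊆ G a nonempty set of Haar measure zero. Then there exists a set A ⊆ G such that AS = {as : a ∈ A, s ∈ S} is not Haar measurable. -/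
open MeasureTheory Pointwise

section Aux

universe u

/-- In a second countable space there are at most continuum many open sets. -/
theorem mk_setOf_isOpen_le_continuum (X : Type u) [TopologicalSpace X]
    [SecondCountableTopology X] :
    Cardinal.mk {s : Set X | IsOpen s} ≤ Cardinal.continuum := by
  obtain ⟨b, hbc, -, hb⟩ := TopologicalSpace.exists_countable_basis X
  haveI := hbc.to_subtype
  have hinj : Function.Injective
      (fun s : {s : Set X | IsOpen s} => {B : b | (B : Set X) ⊆ s.1}) := by
    intro s t hst
    have key : ∀ v, ∀ hvb : v ∈ b, v ⊆ s.1 ↔ v ⊆ t.1 := by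
      intro v hvb
      have hvv := Set.ext_iff.1 hst (⟨v, hvb⟩ : b)
      simpa only [Set.mem_setOf_eq] using hvv
    have hsets : {v ∈ b | v ⊆ s.1} = {v ∈ b | v ⊆ t.1} := by
      ext v
      simp only [Set.mem_setOf_eq]
      exact ⟨fun h => ⟨h.1, (key v h.1).1 h.2⟩, fun h => ⟨h.1, (key v h.1).2 h.2⟩⟩
    apply Subtype.ext
    rw [hb.open_eq_sUnion' s.2, hb.open_eq_sUnion' t.2, hsets]
  calc Cardinal.mk {s : Set X | IsOpen s} ≤ Cardinal.mk (Set b) :=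
        Cardinal.mk_le_of_injective hinj
    _ = 2 ^ Cardinal.mk b := Cardinal.mk_set
    _ ≤ 2 ^ Cardinal.aleph0 :=
        Cardinal.power_le_power_left two_ne_zero Cardinal.mk_le_aleph0
    _ = Cardinal.continuum := Cardinal.two_power_aleph0

open Classical in
noncomputable def pickA {G : Type u} [Group G] (K bad : Set G) (s₀ : G) : G :=
  if h : ((fun z => z * s₀) ⁻¹' K \ bad).Nonempty then h.choose else 1

theorem pickA_spec {G : Type u} [Group G] {K bad : Set G} {s₀ : G}
    (h : ((fun z => z * s₀) ⁻¹' K \ bad).Nonempty) :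
    pickA K bad s₀ * s₀ ∈ K ∧ pickA K bad s₀ ∉ bad := by
  rw [pickA, dif_pos h]
  exact ⟨h.choose_spec.1, h.choose_spec.2⟩

open Classical in
noncomputable def pickB {G : Type u} [Group G] (K bad : Set G) : G :=
  if h : (K \ bad).Nonempty then h.choose else 1

theorem pickB_spec {G : Type u} [Group G] {K bad : Set G} (h : (K \ bad).Nonempty) :
    pickB K bad ∈ K ∧ pickB K bad ∉ bad := by
  rw [pickB, dif_pos h]
  exact ⟨h.choose_spec.1, h.choose_spec.2⟩

/-- One step of the transfinite recursion. -/
noncomputable def haarStep {G : Type u} [Group G] (S : Set G) (s₀ : G) {T : Type u}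
    [LinearOrder T] (k : T → Set G) (x : T) (prev : ∀ y : T, y < x → G × G) : G × G :=
  let a : G := pickA (k x) (⋃ y, ⋃ hy : y < x, (prev y hy).2 • S⁻¹) s₀
  (a, pickB (k x) ((a • S) ∪ ⋃ y, ⋃ hy : y < x, (prev y hy).1 • S))

/-- The transfinite recursion producing, for each index `x`, a pair `(a, b)` where
`a * s₀` lies in the `x`-th compact set but `a • S` avoids all earlier `b`'s, and `b` lies in
the `x`-th compact set avoiding all `a • S` for earlier (and the current) `a`'s. -/
noncomputable def haarAB {G : Type u} [Group G] (S : Set G) (s₀ : G) {T : Type u}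
    [LinearOrder T] [WellFoundedLT T] (k : T → Set G) : T → G × G :=
  WellFoundedLT.fix (haarStep S s₀ k)

theorem haarAB_eq {G : Type u} [Group G] (S : Set G) (s₀ : G) {T : Type u}
    [LinearOrder T] [WellFoundedLT T] (k : T → Set G) (x : T) :
    haarAB S s₀ k x = haarStep S s₀ k x (fun y _ => haarAB S s₀ k y) :=
  WellFoundedLT.fix_eq _ x

theorem haarAB_fst {G : Type u} [Group G] (S : Set G) (s₀ : G) {T : Type u}
    [LinearOrder T] [WellFoundedLT T] (k : T → Set G) (x : T) :
    (haarAB S s₀ k x).1 =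
      pickA (k x) (⋃ y, ⋃ _ : y < x, (haarAB S s₀ k y).2 • S⁻¹) s₀ := by
  rw [haarAB_eq]
  rfl

theorem haarAB_snd {G : Type u} [Group G] (S : Set G) (s₀ : G) {T : Type u}
    [LinearOrder T] [WellFoundedLT T] (k : T → Set G) (x : T) :
    (haarAB S s₀ k x).2 =
      pickB (k x) (((haarAB S s₀ k x).1 • S) ∪
        ⋃ y, ⋃ _ : y < x, (haarAB S s₀ k y).1 • S) := by
  rw [haarAB_fst, haarAB_eq]
  rfl

theorem stmt_10_aux {G : Type u} [Group G] [TopologicalSpace G] [IsTopologicalGroup G]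
    [PolishSpace G] [LocallyCompactSpace G] [MeasurableSpace G] [BorelSpace G]
    (μ : Measure G) [μ.IsHaarMeasure]
    (hMA : ∀ 𝒥 : Set (Set G), Cardinal.mk 𝒥 < Cardinal.continuum →
      (∀ J ∈ 𝒥, μ J = 0) → μ (⋃₀ 𝒥) = 0)
    (S : Set G) (hS : S.Nonempty) (hS0 : μ S = 0) :
    ∃ A : Set G, ¬ NullMeasurableSet (A * S) μ := by
  classical
  obtain ⟨s₀, hs₀S⟩ := hS
  haveI : μ.InnerRegular := inferInstance
  -- basic null facts
  have hSinv : μ S⁻¹ = 0 := by rwa [measure_inv_null]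
  have hsmulS : ∀ g : G, μ (g • S) = 0 := fun g => by
    rw [measure_smul μ g S]; exact hS0
  have hsmulSinv : ∀ g : G, μ (g • S⁻¹) = 0 := fun g => by
    rw [measure_smul μ g S⁻¹]; exact hSinv
  have hμuniv : μ Set.univ ≠ 0 :=
    (isOpen_univ.measure_pos μ ⟨(1 : G), trivial⟩).ne'
  -- the family of compact sets of positive measure
  set 𝒦 : Set (Set G) := {K | IsCompact K ∧ μ K ≠ 0} with h𝒦def
  obtain ⟨K₀, hK₀c, hK₀m⟩ := exists_compact_mem_nhds (1 : G)
  have hK₀pos : μ K₀ ≠ 0 := by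
    have h1 : (0 : ENNReal) < μ (interior K₀) :=
      isOpen_interior.measure_pos μ ⟨1, mem_interior_iff_mem_nhds.2 hK₀m⟩
    exact fun h => (h1.trans_le (measure_mono interior_subset)).ne' h
  haveI hne : Nonempty 𝒦 := ⟨⟨K₀, hK₀c, hK₀pos⟩⟩
  have hcard : Cardinal.mk 𝒦 ≤ Cardinal.continuum := by
    have hinj : Function.Injective (fun K : 𝒦 =>
        (⟨(K : Set G)ᶜ, K.2.1.isClosed.isOpen_compl⟩ : {s : Set G | IsOpen s})) := by
      intro K L h
      apply Subtype.ext
      have h2 := congrArg Subtype.val h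
      simpa using h2
    exact (Cardinal.mk_le_of_injective hinj).trans (mk_setOf_isOpen_le_continuum G)
  -- enumerate 𝒦 by the initial ordinal of the continuum
  set T : Type u := (Cardinal.continuum.{u}).ord.ToType with hT
  have hmkT : Cardinal.mk T = Cardinal.continuum := Cardinal.mk_ord_toType _
  obtain ⟨f⟩ : Nonempty (𝒦 ↪ T) := by
    rw [← Cardinal.le_def, hmkT]; exact hcard
  set k0 : T → 𝒦 := Function.invFun f with hk0
  have hksurj : Function.Surjective k0 := Function.invFun_surjective f.injective
  set k : T → Set G := fun x => (k0 x : Set G) with hk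
  have hkmem : ∀ x, IsCompact (k x) ∧ μ (k x) ≠ 0 := fun x => (k0 x).2
  -- unions over initial segments of null sets are null
  have hsmall : ∀ (x : T) (g : T → Set G), (∀ y, y < x → μ (g y) = 0) →
      μ (⋃ y, ⋃ _ : y < x, g y) = 0 := by
    intro x g hg
    have h1 : (⋃ y, ⋃ _ : y < x, g y) = ⋃₀ (g '' Set.Iio x) := by
      rw [Set.sUnion_image]
      rfl
    rw [h1]
    refine hMA _ (lt_of_le_of_lt Cardinal.mk_image_le ?_) ?_
    · exact Cardinal.mk_Iio_ord_toType x
    · rintro J ⟨y, hy, rfl⟩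
      exact hg y hy
  have hpick : ∀ (x : T) (V : Set G) (g : T → Set G), μ V ≠ 0 →
      (∀ y, y < x → μ (g y) = 0) → (V \ ⋃ y, ⋃ _ : y < x, g y).Nonempty := by
    intro x V g hV hg
    rw [Set.nonempty_iff_ne_empty]
    intro h
    apply hV
    have hsub : V ⊆ ⋃ y, ⋃ _ : y < x, g y := by
      rwa [Set.diff_eq_empty] at h
    exact measure_mono_null hsub (hsmall x g hg)
  -- the recursion
  set ab : T → G × G := haarAB S s₀ k with hab
  -- swap lemma
  have hswap : ∀ p q : G, q ∈ p • S ↔ p ∈ q • S⁻¹ := by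
    intro p q
    rw [Set.mem_smul_set_iff_inv_smul_mem, Set.mem_smul_set_iff_inv_smul_mem,
      smul_eq_mul, smul_eq_mul, Set.mem_inv, mul_inv_rev, inv_inv]
  -- the specification of the recursion
  have hspecA : ∀ x : T, (ab x).1 * s₀ ∈ k x ∧ ∀ y, y < x → (ab y).2 ∉ (ab x).1 • S := by
    intro x
    have hV : μ ((fun z => z * s₀) ⁻¹' (k x)) ≠ 0 := by
      rw [Ne, measure_mul_right_null]
      exact (hkmem x).2
    have h1 : ((fun z => z * s₀) ⁻¹' (k x) \
        ⋃ y, ⋃ _ : y < x, (ab y).2 • S⁻¹).Nonempty :=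
      hpick x _ _ hV (fun y _ => hsmulSinv _)
    have h2 := pickA_spec h1
    rw [hab, haarAB_fst]
    refine ⟨h2.1, fun y hy hmem => ?_⟩
    apply h2.2
    rw [Set.mem_iUnion]
    refine ⟨y, ?_⟩
    rw [Set.mem_iUnion]
    exact ⟨hy, (hswap _ _).1 hmem⟩
  have hspecB : ∀ x : T, (ab x).2 ∈ k x ∧ ∀ y, y ≤ x → (ab x).2 ∉ (ab y).1 • S := by
    intro x
    have h1 : ((k x) \ (((ab x).1 • S) ∪
        ⋃ y, ⋃ _ : y < x, (ab y).1 • S)).Nonempty := by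
      rw [Set.nonempty_iff_ne_empty]
      intro h
      apply (hkmem x).2
      have hsub : k x ⊆ ((ab x).1 • S) ∪ ⋃ y, ⋃ _ : y < x, (ab y).1 • S := by
        rwa [Set.diff_eq_empty] at h
      exact measure_mono_null hsub
        (measure_union_null (hsmulS _) (hsmall x _ (fun y _ => hsmulS _)))
    have h2 := pickB_spec h1
    rw [hab, haarAB_snd]
    refine ⟨h2.1, fun y hy hmem => ?_⟩
    apply h2.2
    rcases eq_or_lt_of_le hy with rfl | hlt
    · exact Set.mem_union_left _ (by rwa [← hab] at hmem)
    · refine Set.mem_union_right _ ?_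
      rw [Set.mem_iUnion]
      refine ⟨y, ?_⟩
      rw [Set.mem_iUnion]
      exact ⟨hlt, by rwa [← hab] at hmem⟩
  -- the set A
  refine ⟨Set.range (fun x => (ab x).1), fun hNM => ?_⟩
  set A : Set G := Set.range (fun x => (ab x).1) with hA
  set M : Set G := A * S with hM
  have hmeet : ∀ x : T, (ab x).1 * s₀ ∈ M ∩ k x := fun x =>
    ⟨Set.mul_mem_mul ⟨x, rfl⟩ hs₀S, (hspecA x).1⟩
  have hmiss : ∀ x : T, (ab x).2 ∈ k x ∧ (ab x).2 ∉ M := by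
    intro x
    refine ⟨(hspecB x).1, fun hmem => ?_⟩
    rw [hM, Set.mem_mul] at hmem
    obtain ⟨p, hp, s, hs, hps⟩ := hmem
    obtain ⟨y, rfl⟩ := hp
    have hmem' : (ab x).2 ∈ (ab y).1 • S := ⟨s, hs, hps⟩
    rcases le_or_gt y x with h | h
    · exact (hspecB x).2 y h hmem'
    · exact (hspecA y).2 x h hmem'
  -- every compact set of positive measure is some `k x`
  have henum : ∀ K : Set G, IsCompact K → μ K ≠ 0 → ∃ x : T, k x = K := by
    intro K hKc hKpos
    obtain ⟨x, hx⟩ := hksurj ⟨K, hKc, hKpos⟩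
    exact ⟨x, congrArg Subtype.val hx⟩
  -- derive the contradiction
  obtain ⟨t, htsub, htm, htae⟩ := hNM.exists_measurable_subset_ae_eq
  have ht0 : μ t = 0 := by
    by_contra h
    obtain ⟨K, hKt, hKc, hKpos⟩ := htm.exists_lt_isCompact (pos_iff_ne_zero.2 h)
    obtain ⟨x, hx⟩ := henum K hKc hKpos.ne'
    exact (hmiss x).2 (htsub (hKt (hx ▸ (hmiss x).1)))
  have hM0 : μ M = 0 := by
    have h1 : μ (M \ t) = 0 := (ae_eq_set.1 htae).2
    have h2 : M ⊆ t ∪ (M \ t) := fun z hz => by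
      by_cases h : z ∈ t
      · exact Set.mem_union_left _ h
      · exact Set.mem_union_right _ ⟨hz, h⟩
    exact measure_mono_null h2 (measure_union_null ht0 h1)
  set N : Set G := toMeasurable μ M with hN
  have hNm : MeasurableSet N := measurableSet_toMeasurable μ M
  have hN0 : μ N = 0 := by rw [hN, measure_toMeasurable]; exact hM0
  have hNc : μ Nᶜ ≠ 0 := by
    intro h
    apply hμuniv
    have : (Set.univ : Set G) ⊆ N ∪ Nᶜ := by
      rw [Set.union_compl_self]
    exact measure_mono_null this (measure_union_null hN0 h)
  obtain ⟨K, hKN, hKc, hKpos⟩ := hNm.compl.exists_lt_isCompact (pos_iff_ne_zero.2 hNc)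
  obtain ⟨x, hx⟩ := henum K hKc hKpos.ne'
  have h1 : (ab x).1 * s₀ ∈ N := subset_toMeasurable μ M (hmeet x).1
  have h2 : (ab x).1 * s₀ ∈ Nᶜ := hKN (hx ▸ (hmeet x).2)
  exact h2 h1

end Aux

/-- (Under Martin's Axiom, stated here via its consequence that the additivity of the Haar
null ideal equals the continuum.) If `G` is a locally compact Polish group and `S ⊆ G` is a
nonempty set of Haar measure zero, then there is `A ⊆ G` with `A * S` not Haar measurable. -/
theorem stmt_10 {G : Type*} [Group G] [TopologicalSpace G] [IsTopologicalGroup G]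
    [PolishSpace G] [LocallyCompactSpace G] [MeasurableSpace G] [BorelSpace G]
    (μ : Measure G) [μ.IsHaarMeasure]
    (hMA : ∀ 𝒥 : Set (Set G), Cardinal.mk 𝒥 < Cardinal.continuum →
      (∀ J ∈ 𝒥, μ J = 0) → μ (⋃₀ 𝒥) = 0)
    (S : Set G) (hS : S.Nonempty) (hS0 : μ S = 0) :
    ∃ A : Set G, ¬ NullMeasurableSet (A * S) μ := by
  exact stmt_10_aux μ hMA S hS hS0
end
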